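/- Let R be a ring. A left R-module M is flat if and only if its character module M^+ = Hom_ℤ(M, ℚ/ℤ) is an injective right R-module. -/

import Mathlib

universe u

/-! Common definitions: character modules, purity, pure injectivity. -/

open MulOpposite


/-- The character group `M⁺ = Hom_ℤ(M, ℚ/ℤ)`. -/
def CharMod (M : Type u) [AddCommGroup M] : Type u := M →+ AddCircle (1 : ℚ)

instance (M : Type u) [AddCommGroup M] : AddCommGroup (CharMod M) :=
  inferInstanceAs (AddCommGroup (M →+ AddCircle (1 : ℚ)))

instance (M : Type u) [AddCommGroup M] : FunLike (CharMod M) M (AddCircle (1 : ℚ)) :=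
  inferInstanceAs (FunLike (M →+ AddCircle (1 : ℚ)) M (AddCircle (1 : ℚ)))

instance (M : Type u) [AddCommGroup M] :
    AddMonoidHomClass (CharMod M) M (AddCircle (1 : ℚ)) :=
  inferInstanceAs (AddMonoidHomClass (M →+ AddCircle (1 : ℚ)) M (AddCircle (1 : ℚ)))

/-- If `M` is a left `R`-module, `M⁺` is a right `R`-module via `(c • r) m = c (r • m)`. -/
instance CharMod.moduleOp (R : Type v) [Ring R] (M : Type u) [AddCommGroup M] [Module R M] :
    Module Rᵐᵒᵖ (CharMod M) where
  smul r c := (c : M →+ AddCircle (1 : ℚ)).comp (DistribMulAction.toAddMonoidHom M r.unop)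
  one_smul c := AddMonoidHom.ext fun m => congrArg c (one_smul R m)
  mul_smul r s c := AddMonoidHom.ext fun m => congrArg c (mul_smul s.unop r.unop m)
  smul_zero r := rfl
  smul_add r c d := rfl
  add_smul r s c := AddMonoidHom.ext fun m => by
    show c ((r.unop + s.unop) • m) = c (r.unop • m) + c (s.unop • m)
    rw [add_smul, map_add]
  zero_smul c := AddMonoidHom.ext fun m => by
    show c ((0 : R) • m) = 0
    rw [zero_smul, map_zero]

@[simp] lemma CharMod.op_smul_apply {R : Type v} [Ring R] {M : Type u} [AddCommGroup M]
    [Module R M] (r : Rᵐᵒᵖ) (c : CharMod M) (m : M) : (r • c) m = c (r.unop • m) := rfl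

/-- If `N` is a right `R`-module, `N⁺` is a left `R`-module via `(r • c) n = c (n • r)`. -/
instance CharMod.moduleUnop (R : Type v) [Ring R] (N : Type u) [AddCommGroup N] [Module Rᵐᵒᵖ N] :
    Module R (CharMod N) where
  smul r c := (c : N →+ AddCircle (1 : ℚ)).comp (DistribMulAction.toAddMonoidHom N (op r))
  one_smul c := AddMonoidHom.ext fun n => congrArg c (one_smul Rᵐᵒᵖ n)
  mul_smul r s c := AddMonoidHom.ext fun n => by
    show c ((op (r * s)) • n) = c (op s • op r • n)
    rw [← mul_smul]; rfl
  smul_zero r := rfl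
  smul_add r c d := rfl
  add_smul r s c := AddMonoidHom.ext fun n => by
    show c ((op (r + s)) • n) = c (op r • n) + c (op s • n)
    rw [show op (r + s) = op r + op s from rfl, add_smul, map_add]
  zero_smul c := AddMonoidHom.ext fun n => by
    show c ((op (0 : R)) • n) = 0
    rw [show op (0 : R) = (0 : Rᵐᵒᵖ) from rfl, zero_smul, map_zero]

@[simp] lemma CharMod.unop_smul_apply {R : Type v} [Ring R] {N : Type u} [AddCommGroup N]
    [Module Rᵐᵒᵖ N] (r : R) (c : CharMod N) (n : N) : (r • c) n = c (op r • n) := rfl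

/-- The dual `f⁺ : C⁺ → A⁺` of a map `f : A → C` of left `R`-modules. -/
def charDual {R : Type v} [Ring R] {A C : Type u} [AddCommGroup A] [Module R A]
    [AddCommGroup C] [Module R C] (f : A →ₗ[R] C) : CharMod C →ₗ[Rᵐᵒᵖ] CharMod A where
  toFun c := (c : C →+ AddCircle (1 : ℚ)).comp f.toAddMonoidHom
  map_add' _ _ := rfl
  map_smul' r c := AddMonoidHom.ext fun a => (congrArg c (f.map_smul r.unop a)).symm

/-- The canonical evaluation map `σ_M : M → M⁺⁺`. -/
def charEval (R : Type v) [Ring R] (M : Type u) [AddCommGroup M] [Module R M] :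
    M →ₗ[R] CharMod (CharMod M) where
  toFun m :=
    { toFun := fun c => c m
      map_zero' := rfl
      map_add' := fun _ _ => rfl }
  map_add' m m' := AddMonoidHom.ext fun c => c.map_add m m'
  map_smul' r m := AddMonoidHom.ext fun c => rfl

/-- A linear map `i : M → N` is a pure monomorphism if it is injective and every
map from a finitely presented module to `N ⧸ im i` lifts to `N`, i.e. the short exact
sequence `0 → M → N → N ⧸ im i → 0` remains exact after applying `Hom(F, -)` for all
finitely presented `F`. -/
def IsPureMono {R : Type v} [Ring R] {M N : Type u} [AddCommGroup M] [Module R M]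
    [AddCommGroup N] [Module R N] (i : M →ₗ[R] N) : Prop :=
  Function.Injective i ∧
    ∀ (F : Type u) [AddCommGroup F] [Module R F], Module.FinitePresentation R F →
      ∀ g : F →ₗ[R] (N ⧸ LinearMap.range i),
        ∃ h : F →ₗ[R] N, (LinearMap.range i).mkQ.comp h = g

/-- A module `E` is pure injective if every map to `E` extends along pure monomorphisms. -/
def IsPureInjective (R : Type v) [Ring R] (E : Type u) [AddCommGroup E] [Module R E] : Prop :=
  ∀ (M N : Type u) [AddCommGroup M] [Module R M] [AddCommGroup N] [Module R N]
    (i : M →ₗ[R] N), IsPureMono i →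
      ∀ f : M →ₗ[R] E, ∃ g : N →ₗ[R] E, g.comp i = f

/-- A module `M` over an arbitrary ring `R` is flat iff every homomorphism from a finitely
presented module to `M` factors through a finitely generated free module (Lazard-Govorov);
we use this tensor-free characterization as the definition of flatness. -/
def IsFlat (R : Type v) [Ring R] (M : Type u) [AddCommGroup M] [Module R M] : Prop :=
  ∀ (F : Type u) [AddCommGroup F] [Module R F], Module.FinitePresentation R F →
    ∀ g : F →ₗ[R] M, ∃ (n : ℕ) (p : F →ₗ[R] (Fin n → R)) (q : (Fin n → R) →ₗ[R] M),
      q.comp p = g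



section lcomb
variable {R : Type v} [Ring R] {ι : Type*} [Fintype ι] {N : Type*} [AddCommGroup N] [Module R N]
def lcomb (y : ι → N) : (ι → R) →ₗ[R] N where
  toFun v := ∑ j, v j • y j
  map_add' v w := by simp [add_smul, Finset.sum_add_distrib]
  map_smul' r v := by simp [mul_smul, Finset.smul_sum]
@[simp] lemma lcomb_apply (y : ι → N) (v : ι → R) : lcomb y v = ∑ j, v j • y j := rfl
lemma lcomb_single [DecidableEq ι] (y : ι → N) (i : ι) :
    lcomb y (Pi.single i (1 : R)) = y i := by
  classical
  simp only [lcomb_apply]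
  rw [Finset.sum_eq_single i]
  · simp
  · intro b _ hb; simp [Pi.single_apply, hb]
  · simp
lemma linearMap_pi_eq_sum [DecidableEq ι] (φ : (ι → R) →ₗ[R] N) (v : ι → R) :
    φ v = ∑ i, v i • φ (Pi.single i (1 : R)) := by
  classical
  conv_lhs => rw [← Finset.univ_sum_single v, map_sum]
  refine Finset.sum_congr rfl fun i _ => ?_
  have h : Pi.single i (v i) = v i • (Pi.single i (1 : R) : ι → R) := by
    rw [← Pi.single_smul, smul_eq_mul, mul_one]
  rw [h, map_smul]
end lcomb

/-- Equational criterion: a flat module trivializes single relations. -/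
lemma IsFlat.relation_trivial {R : Type u} [Ring R] {M : Type u} [AddCommGroup M] [Module R M]
    (hM : IsFlat R M) (k : ℕ) (r : Fin k → R) (x : Fin k → M)
    (hx : ∑ i, r i • x i = 0) :
    ∃ (n : ℕ) (A : Fin k → Fin n → R) (y : Fin n → M),
      (∀ j, ∑ i, r i * A i j = 0) ∧ ∀ i, x i = ∑ j, A i j • y j := by
  classical
  set K : Submodule R (Fin k → R) := Submodule.span R {r} with hK
  have hKfg : K.FG := ⟨{r}, by simp [hK]⟩
  have hFP : Module.FinitePresentation R ((Fin k → R) ⧸ K) :=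
    Module.finitePresentation_of_free_of_surjective K.mkQ K.mkQ_surjective
      (by rwa [Submodule.ker_mkQ])
  -- the map g : quotient → M
  have hg0 : K ≤ LinearMap.ker (lcomb x) := by
    rw [hK, Submodule.span_le]
    rintro v rfl
    simpa using hx
  set g : ((Fin k → R) ⧸ K) →ₗ[R] M := Submodule.liftQ K (lcomb x) hg0 with hgdef
  obtain ⟨n, p, q, hpq⟩ := hM _ hFP g
  refine ⟨n, fun i => p (K.mkQ (Pi.single i 1)), fun j => q (Pi.single j 1), ?_, ?_⟩
  · intro j
    have h0 : p (K.mkQ r) = 0 := by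
      have : K.mkQ r = 0 := (Submodule.Quotient.mk_eq_zero K).2 (Submodule.subset_span rfl)
      rw [show K.mkQ r = (0 : (Fin k → R) ⧸ K) from this, map_zero]
    have hrep := linearMap_pi_eq_sum (p.comp K.mkQ) r
    have h3 : ∑ i, r i • p (K.mkQ (Pi.single i 1)) = 0 := by
      rw [← h0]
      exact (by simpa [LinearMap.comp_apply] using hrep.symm)
    have h4 := congrFun h3 j
    simpa [Finset.sum_apply, smul_eq_mul] using h4
  · intro i
    have h1 : g (K.mkQ (Pi.single i 1)) = x i := by
      rw [hgdef, Submodule.mkQ_apply, Submodule.liftQ_apply, lcomb_single]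
    have h2 : q (p (K.mkQ (Pi.single i 1))) = x i := by
      rw [← h1, ← hpq]; rfl
    rw [← h2, linearMap_pi_eq_sum q (p (K.mkQ (Pi.single i 1)))]


/-- Evaluation at a point, as an additive map on the character group. -/
def CharMod.evalHom {M : Type u} [AddCommGroup M] (m : M) : CharMod M →+ AddCircle (1 : ℚ) where
  toFun c := c m
  map_zero' := rfl
  map_add' _ _ := rfl

@[simp] lemma CharMod.evalHom_apply {M : Type u} [AddCommGroup M] (m : M) (c : CharMod M) :
    CharMod.evalHom m c = c m := rfl

/-- Injectivity of the character module trivializes finite systems of relations. -/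
lemma relation_trivial_of_injective {R : Type u} [Ring R] {M : Type u} [AddCommGroup M]
    [Module R M] (hI : Module.Injective Rᵐᵒᵖ (CharMod M)) (m l : ℕ)
    (k : Fin l → Fin m → R) (x : Fin m → M) (hx : ∀ j, ∑ i, k j i • x i = 0) :
    ∃ (n : ℕ) (A : Fin m → Fin n → R) (y : Fin n → M),
      (∀ j j', ∑ i, k j i * A i j' = 0) ∧ ∀ i, x i = ∑ j', A i j' • y j' := by
  classical
  set P : (Fin m → M) → Prop := fun z =>
    ∃ (n : ℕ) (A : Fin m → Fin n → R) (y : Fin n → M),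
      (∀ j j', ∑ i, k j i * A i j' = 0) ∧ ∀ i, z i = ∑ j', A i j' • y j' with hP
  set T : AddSubgroup (Fin m → M) :=
    { carrier := P
      zero_mem' := ⟨0, (fun _ _ => 0), (fun j => (0 : M)), fun j j' => j'.elim0,
        fun i => by simp⟩
      add_mem' := by
        rintro z w ⟨n₁, A₁, y₁, h₁, e₁⟩ ⟨n₂, A₂, y₂, h₂, e₂⟩
        refine ⟨n₁ + n₂, fun i => Fin.append (A₁ i) (A₂ i), Fin.append y₁ y₂, ?_, ?_⟩
        · intro j j'
          refine Fin.addCases (fun j'' => ?_) (fun j'' => ?_) j' <;>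
            simp [Fin.append_left, Fin.append_right, h₁, h₂]
        · intro i
          simp only [Pi.add_apply, e₁ i, e₂ i, Fin.sum_univ_add, Fin.append_left,
            Fin.append_right]
      neg_mem' := by
        rintro z ⟨n₁, A₁, y₁, h₁, e₁⟩
        refine ⟨n₁, A₁, -y₁, h₁, fun i => ?_⟩
        simp [e₁ i, smul_neg, Finset.sum_neg_distrib] } with hT
  suffices hx_mem : x ∈ T by exact hx_mem
  by_contra hxT
  have hne : (QuotientAddGroup.mk x : (Fin m → M) ⧸ T) ≠ 0 := by
    simpa [QuotientAddGroup.eq_zero_iff] using hxT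
  obtain ⟨χ', hχ'⟩ := CharacterModule.exists_character_apply_ne_zero_of_ne_zero hne
  set χ : (Fin m → M) →+ AddCircle (1 : ℚ) :=
    (χ' : ((Fin m → M) ⧸ T) →+ AddCircle (1 : ℚ)).comp (QuotientAddGroup.mk' T) with hχ
  have hχT : ∀ z ∈ T, χ z = 0 := by
    intro z hz
    have hz0 : (QuotientAddGroup.mk' T) z = 0 := (QuotientAddGroup.eq_zero_iff z).2 hz
    show χ' (QuotientAddGroup.mk' T z) = 0
    rw [hz0, map_zero]
  have hχx : χ x ≠ 0 := hχ'
  set c : Fin m → CharMod M := fun i =>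
    (χ.comp (AddMonoidHom.single (fun _ : Fin m => M) i) : M →+ AddCircle (1 : ℚ)) with hc
  have hχsum : ∀ z : Fin m → M, χ z = ∑ i, c i (z i) := by
    intro z
    conv_lhs => rw [← Finset.univ_sum_single z, map_sum]
    rfl
  set v : (Fin m → Rᵐᵒᵖ) →ₗ[Rᵐᵒᵖ] (Fin l → Rᵐᵒᵖ) :=
    LinearMap.pi (fun j => lcomb (fun i => op (k j i))) with hv
  set ct : (Fin m → Rᵐᵒᵖ) →ₗ[Rᵐᵒᵖ] CharMod M := lcomb c with hct
  have hker : LinearMap.ker v ≤ LinearMap.ker ct := by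
    intro a ha
    rw [LinearMap.mem_ker] at ha ⊢
    have ha' : ∀ j, ∑ i, k j i * (a i).unop = 0 := by
      intro j
      have h0 := congrFun (congrArg (fun (w : Fin l → Rᵐᵒᵖ) => w) ha) j
      have h1 : ∑ i, a i • op (k j i) = (0 : Rᵐᵒᵖ) := by
        simpa [hv, LinearMap.pi_apply, Finset.sum_apply] using h0
      have h2 : op (∑ i, k j i * (a i).unop) = (0 : Rᵐᵒᵖ) := by
        have hop : op (∑ i, k j i * (a i).unop) = ∑ i, op (k j i * (a i).unop) :=
          map_sum (opAddEquiv : R ≃+ Rᵐᵒᵖ) _ _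
        rw [hop, ← h1]
        exact Finset.sum_congr rfl fun i _ => rfl
      exact op_injective (by simpa using h2)
    refine DFunLike.ext _ _ fun ymem => ?_
    have hgen : (fun i => (a i).unop • ymem) ∈ T := by
      refine ⟨1, fun i _ => (a i).unop, fun _ => ymem, fun j j' => ha' j, fun i => by simp⟩
    show (lcomb c a : CharMod M) ymem = (0 : CharMod M) ymem
    have hz : (0 : CharMod M) ymem = 0 := rfl
    rw [hz]
    calc (lcomb c a : CharMod M) ymem
        = CharMod.evalHom ymem (∑ i, a i • c i) := rfl
      _ = ∑ i, CharMod.evalHom ymem (a i • c i) := map_sum _ _ _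
      _ = ∑ i, c i ((a i).unop • ymem) := rfl
      _ = χ (fun i => (a i).unop • ymem) := (hχsum _).symm
      _ = 0 := hχT _ hgen
  set w : (LinearMap.range v) →ₗ[Rᵐᵒᵖ] CharMod M :=
    (Submodule.liftQ _ ct hker).comp v.quotKerEquivRange.symm.toLinearMap with hw
  obtain ⟨W, hW⟩ := hI.out (LinearMap.range v).subtype (Submodule.injective_subtype _) w
  set ψ : Fin l → CharMod M := fun j => W (Pi.single j 1) with hψ
  have hci : ∀ i, c i = ∑ j, op (k j i) • ψ j := by
    intro i
    have h1 : ct (Pi.single i 1) = c i := lcomb_single c i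
    have h2 := v.quotKerEquivRange_apply_mk (Pi.single i (1 : Rᵐᵒᵖ))
    have h4 : W (v (Pi.single i 1)) = c i := by
      rw [← h2,
        show ((v.quotKerEquivRange (Submodule.Quotient.mk (Pi.single i (1:Rᵐᵒᵖ)))
            : LinearMap.range v) : Fin l → Rᵐᵒᵖ)
          = (LinearMap.range v).subtype
            (v.quotKerEquivRange (Submodule.Quotient.mk (Pi.single i 1))) from rfl,
        hW, hw, LinearMap.comp_apply, LinearEquiv.coe_toLinearMap,
        LinearEquiv.symm_apply_apply, Submodule.liftQ_apply, h1]
    have h5 : v (Pi.single i (1 : Rᵐᵒᵖ)) = fun j => op (k j i) := by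
      funext j
      show lcomb (fun i' => op (k j i')) (Pi.single i (1 : Rᵐᵒᵖ)) = op (k j i)
      exact lcomb_single _ i
    rw [← h4, h5]
    have h6 : (fun j => op (k j i) : Fin l → Rᵐᵒᵖ) = ∑ j, Pi.single j (op (k j i)) := by
      rw [Finset.univ_sum_single]
    rw [h6, map_sum]
    refine Finset.sum_congr rfl fun j _ => ?_
    have h7 : (Pi.single j (op (k j i)) : Fin l → Rᵐᵒᵖ)
        = op (k j i) • (Pi.single j (1 : Rᵐᵒᵖ) : Fin l → Rᵐᵒᵖ) := by
      rw [← Pi.single_smul, smul_eq_mul, mul_one]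
    rw [h7, map_smul, hψ]
  apply hχx
  rw [hχsum]
  have h8 : ∀ i, c i (x i) = ∑ j, ψ j (k j i • x i) := by
    intro i
    rw [hci i]
    calc (∑ j, op (k j i) • ψ j : CharMod M) (x i)
        = CharMod.evalHom (x i) (∑ j, op (k j i) • ψ j) := rfl
      _ = ∑ j, CharMod.evalHom (x i) (op (k j i) • ψ j) := map_sum _ _ _
      _ = ∑ j, ψ j (k j i • x i) := rfl
  calc ∑ i, c i (x i) = ∑ i, ∑ j, ψ j (k j i • x i) := Finset.sum_congr rfl fun i _ => h8 i
    _ = ∑ j, ∑ i, ψ j (k j i • x i) := Finset.sum_comm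
    _ = ∑ j, ψ j (∑ i, k j i • x i) := Finset.sum_congr rfl fun j _ => (map_sum _ _ _).symm
    _ = 0 := by simp [hx]

lemma injective_of_isFlat {R : Type u} [Ring R] (M : Type u) [AddCommGroup M] [Module R M]
    (hM : IsFlat R M) : Module.Injective Rᵐᵒᵖ (CharMod M) := by
  classical
  refine Module.Baer.injective ?_
  intro I g
  -- set up the auxiliary maps from the free abelian group on `I × M`
  set u : ((↥I × M) →₀ ℤ) →ₗ[ℤ] M :=
    Finsupp.lsum ℤ (fun p : ↥I × M =>
      LinearMap.toSpanSingleton ℤ M (((p.1 : Rᵐᵒᵖ)).unop • p.2)) with hu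
  set χ : ((↥I × M) →₀ ℤ) →ₗ[ℤ] AddCircle (1 : ℚ) :=
    Finsupp.lsum ℤ (fun p : ↥I × M =>
      LinearMap.toSpanSingleton ℤ (AddCircle (1 : ℚ)) (g p.1 p.2)) with hχ
  -- key step : `ker u ≤ ker χ`, using flatness of `M`
  have key : LinearMap.ker u ≤ LinearMap.ker χ := by
    intro s hsk
    rw [LinearMap.mem_ker] at hsk ⊢
    set t : Finset (↥I × M) := s.support with ht
    set e : Fin t.card ≃ ↥t := t.equivFin.symm with he
    set pa : Fin t.card → ↥I × M := fun a => (e a : ↥I × M) with hpa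
    set r : Fin t.card → R := fun a => ((pa a).1 : Rᵐᵒᵖ).unop with hr
    set xv : Fin t.card → M := fun a => s (pa a) • (pa a).2 with hxv
    have husum : ∀ (φ : ↥I × M → M),
        ∑ p ∈ t, φ p = ∑ a, φ (pa a) := by
      intro φ
      rw [← Finset.sum_coe_sort t φ]
      exact (Equiv.sum_comp e (fun b => φ (b : ↥I × M))).symm
    have hAC : ∀ (φ : ↥I × M → AddCircle (1:ℚ)),
        ∑ p ∈ t, φ p = ∑ a, φ (pa a) := by
      intro φ
      rw [← Finset.sum_coe_sort t φ]
      exact (Equiv.sum_comp e (fun b => φ (b : ↥I × M))).symm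
    have hrel : ∑ a, r a • xv a = 0 := by
      have h1 : u s = ∑ p ∈ t, s p • (((p.1 : Rᵐᵒᵖ)).unop • p.2) := by
        rw [hu]
        rfl
      rw [← hsk, h1, husum]
      refine Finset.sum_congr rfl fun a _ => ?_
      rw [hr, hxv]
      exact (smul_comm _ _ _)
    obtain ⟨n, A, y, hA, hxy⟩ := hM.relation_trivial t.card r xv hrel
    have h2 : χ s = ∑ p ∈ t, s p • g p.1 p.2 := by
      rw [hχ]
      rfl
    rw [h2, hAC]
    have h3 : ∀ a, s (pa a) • g (pa a).1 (pa a).2 = g (pa a).1 (xv a) := by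
      intro a
      rw [hxv]
      exact (map_zsmul (g (pa a).1) _ _).symm
    calc ∑ a, s (pa a) • g (pa a).1 (pa a).2
        = ∑ a, g (pa a).1 (xv a) := Finset.sum_congr rfl fun a _ => h3 a
      _ = ∑ a, ∑ j, g (pa a).1 (A a j • y j) := by
          refine Finset.sum_congr rfl fun a _ => ?_
          rw [hxy a, map_sum]
      _ = ∑ a, ∑ j, (g (op (A a j) • (pa a).1)) (y j) := by
          refine Finset.sum_congr rfl fun a _ => Finset.sum_congr rfl fun j _ => ?_
          rw [show g (op (A a j) • (pa a).1) = op (A a j) • g ((pa a).1) from map_smul g _ _]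
          rfl
      _ = ∑ j, ∑ a, (g (op (A a j) • (pa a).1)) (y j) := Finset.sum_comm
      _ = ∑ j, (g (∑ a, op (A a j) • (pa a).1)) (y j) := by
          refine Finset.sum_congr rfl fun j _ => ?_
          rw [map_sum]
          exact (map_sum (CharMod.evalHom (y j)) _ _).symm
      _ = 0 := by
          have hterm : ∀ j, (g (∑ a, op (A a j) • (pa a).1)) (y j) = 0 := by
            intro j
            have hz : (∑ a, op (A a j) • (pa a).1 : ↥I) = 0 := by
              apply Subtype.ext
              push_cast
              have hconst : ∀ a, (op (A a j) • ((pa a).1 : Rᵐᵒᵖ)) = op (r a * A a j) :=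
                fun a => rfl
              calc ∑ a, (op (A a j) • ((pa a).1 : Rᵐᵒᵖ)) = ∑ a, op (r a * A a j) :=
                    Finset.sum_congr rfl fun a _ => hconst a
                _ = op (∑ a, r a * A a j) := (map_sum (opAddEquiv : R ≃+ Rᵐᵒᵖ) _ _).symm
                _ = 0 := by rw [hA j, op_zero]
            rw [hz, map_zero]
            rfl
          exact (Finset.sum_congr rfl fun j _ => hterm j).trans (by simp)
  -- extend the induced character of `range u` to `M`
  set cq : (((↥I × M) →₀ ℤ) ⧸ LinearMap.ker u) →ₗ[ℤ] AddCircle (1 : ℚ) :=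
    Submodule.liftQ _ χ key with hcq
  set c₀ : (LinearMap.range u) →ₗ[ℤ] AddCircle (1 : ℚ) :=
    cq ∘ₗ u.quotKerEquivRange.symm.toLinearMap with hc₀
  obtain ⟨cM, hcM⟩ := CharacterModule.dual_surjective_of_injective (R := ℤ)
    (LinearMap.range u).subtype (Submodule.injective_subtype _) c₀.toAddMonoidHom
  set c : CharMod M := (cM : M →+ AddCircle (1 : ℚ)) with hcdef
  refine ⟨LinearMap.toSpanSingleton Rᵐᵒᵖ (CharMod M) c, ?_⟩
  intro xx mem
  refine DFunLike.ext _ _ fun mm => ?_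
  have hmem : xx.unop • mm ∈ LinearMap.range u := by
    refine ⟨Finsupp.single (⟨⟨xx, mem⟩, mm⟩ : ↥I × M) (1 : ℤ), ?_⟩
    rw [hu]
    simp [Finsupp.lsum_single]
  obtain ⟨δ, hδ⟩ := hmem
  -- `c` agrees with `c₀` on the range of `u`
  have hagree : ∀ z : LinearMap.range u, cM ((z : M)) = c₀ z := by
    intro z
    exact DFunLike.congr_fun hcM z
  have hLHS : (LinearMap.toSpanSingleton Rᵐᵒᵖ (CharMod M) c xx) mm = cM (xx.unop • mm) := rfl
  have step : ∀ δ' : (↥I × M) →₀ ℤ, cM (u δ') = χ δ' := by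
    intro δ'
    have h5 : ((u.quotKerEquivRange (Submodule.Quotient.mk δ') : LinearMap.range u) : M)
        = u δ' := u.quotKerEquivRange_apply_mk δ'
    have h6 : cM (u δ') = c₀ (u.quotKerEquivRange (Submodule.Quotient.mk δ')) := by
      rw [← hagree, h5]
    rw [h6, hc₀, LinearMap.comp_apply, LinearEquiv.coe_toLinearMap,
      LinearEquiv.symm_apply_apply, Submodule.liftQ_apply]
  -- conclude
  have hδ2 : χ (Finsupp.single (⟨⟨xx, mem⟩, mm⟩ : ↥I × M) (1 : ℤ))
      = g ⟨xx, mem⟩ mm := by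
    rw [hχ]
    simp [Finsupp.lsum_single]
  have hδ1 : u (Finsupp.single (⟨⟨xx, mem⟩, mm⟩ : ↥I × M) (1 : ℤ)) = xx.unop • mm := by
    rw [hu]
    simp [Finsupp.lsum_single]
  rw [hLHS, ← hδ1, step, hδ2]

lemma isFlat_of_injective {R : Type u} [Ring R] (M : Type u) [AddCommGroup M] [Module R M]
    (hI : Module.Injective Rᵐᵒᵖ (CharMod M)) : IsFlat R M := by
  classical
  intro F _ _ hFP g
  haveI := hFP
  obtain ⟨m, sgen, hsgen⟩ := Module.Finite.exists_fin (R := R) (M := F)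
  set π : (Fin m → R) →ₗ[R] F := lcomb sgen with hπdef
  have hπ : Function.Surjective π := by
    intro z
    have hz : z ∈ Submodule.span R (Set.range sgen) := hsgen ▸ Submodule.mem_top
    obtain ⟨cz, hcz⟩ := (Submodule.mem_span_range_iff_exists_fun R).1 hz
    exact ⟨cz, hcz⟩
  have hker : (LinearMap.ker π).FG := Module.FinitePresentation.fg_ker π hπ
  obtain ⟨l, kgen, hkgen⟩ := Submodule.fg_iff_exists_fin_generating_family.mp hker
  set x : Fin m → M := fun i => g (π (Pi.single i 1)) with hx
  have hrel : ∀ j, ∑ i, kgen j i • x i = 0 := by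
    intro j
    have h1 : (g ∘ₗ π) (kgen j) = ∑ i, kgen j i • x i :=
      linearMap_pi_eq_sum (g ∘ₗ π) (kgen j)
    have h2 : kgen j ∈ LinearMap.ker π := by
      rw [← hkgen]
      exact Submodule.subset_span ⟨j, rfl⟩
    rw [← h1, LinearMap.comp_apply, LinearMap.mem_ker.1 h2, map_zero]
  obtain ⟨n, A, y, hA, hxy⟩ := relation_trivial_of_injective hI m l kgen x hrel
  set q : (Fin n → R) →ₗ[R] M := lcomb y with hq
  set p₀ : (Fin m → R) →ₗ[R] (Fin n → R) :=
    LinearMap.pi (fun j => lcomb (fun i => A i j)) with hp₀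
  have hker0 : LinearMap.ker π ≤ LinearMap.ker p₀ := by
    rw [← hkgen, Submodule.span_le]
    rintro _ ⟨j, rfl⟩
    rw [SetLike.mem_coe, LinearMap.mem_ker]
    funext j'
    show lcomb (fun i => A i j') (kgen j) = 0
    rw [lcomb_apply]
    calc ∑ i, kgen j i • A i j' = ∑ i, kgen j i * A i j' :=
          Finset.sum_congr rfl fun i _ => rfl
      _ = 0 := hA j j'
  set e := LinearMap.quotKerEquivOfSurjective π hπ with he
  set p : F →ₗ[R] (Fin n → R) :=
    (Submodule.liftQ (LinearMap.ker π) p₀ hker0) ∘ₗ e.symm.toLinearMap with hp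
  refine ⟨n, p, q, ?_⟩
  apply LinearMap.ext
  intro z
  obtain ⟨vv, rfl⟩ := hπ z
  have hemk : e (Submodule.Quotient.mk vv) = π vv := by
    rw [he]
    simp [LinearMap.quotKerEquivOfSurjective, LinearMap.quotKerEquivRange_apply_mk]
  have hpπ : p (π vv) = p₀ vv := by
    rw [hp, LinearMap.comp_apply, LinearEquiv.coe_toLinearMap, ← hemk,
      LinearEquiv.symm_apply_apply, Submodule.liftQ_apply]
  rw [LinearMap.comp_apply, hpπ]
  have hgπ : g (π vv) = ∑ i, vv i • x i := linearMap_pi_eq_sum (g ∘ₗ π) vv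
  rw [hgπ]
  have hp₀v : ∀ j, p₀ vv j = ∑ i, vv i • A i j := fun j => rfl
  calc q (p₀ vv) = ∑ j, p₀ vv j • y j := rfl
    _ = ∑ j, ∑ i, (vv i * A i j) • y j := by
        refine Finset.sum_congr rfl fun j _ => ?_
        rw [hp₀v j, Finset.sum_smul]
        rfl
    _ = ∑ i, ∑ j, (vv i * A i j) • y j := Finset.sum_comm
    _ = ∑ i, vv i • x i := by
        refine Finset.sum_congr rfl fun i _ => ?_
        rw [hxy i, Finset.smul_sum]
        exact Finset.sum_congr rfl fun j _ => mul_smul _ _ _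


/-- **Lambek's theorem.** A left `R`-module `M` is flat if and only if its character module
`M⁺ = Hom_ℤ(M, ℚ/ℤ)` is an injective right `R`-module. -/
theorem stmt4 {R : Type u} [Ring R] (M : Type u) [AddCommGroup M] [Module R M] :
    IsFlat R M ↔ Module.Injective Rᵐᵒᵖ (CharMod M) :=
  ⟨injective_of_isFlat M, isFlat_of_injective M⟩
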